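/- Let c ∈ ℝ^{>0}, a ∈ ℝ^×, and y ∈ 𝕋^× with |y|^c (y+1) = a e^x. Then y ∼ b e^{x/(c+1)}, where b = a^{1/(c+1)} if a > 0 and b = −(−a)^{1/(c+1)} if a < 0. (Here f ∼ g means f − g ≺ g.) -/

import Mathlib

/-!
Let `c ∈ ℝ^{>0}`, `a ∈ ℝ^×`, and `y ∈ 𝕋^×` with `|y|^c (y+1) = a e^x`.  Then
`y ∼ b e^{x/(c+1)}` where `b = a^{1/(c+1)}` if `a > 0` and
`b = −(−a)^{1/(c+1)}` if `a < 0`.  (`f ∼ g` means `f − g ≺ g`, and `f ≺ g`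
means `|f| < r|g|` for every real `r > 0`.)

`𝕋` is axiomatized as a linearly ordered field `T`, an `ℝ`-algebra with
strictly monotone structure map, equipped with strictly increasing positive
`exp` satisfying `exp (s+t) = exp s · exp t`, compatible with the real
exponential, with right inverse `log` on the positive elements; `E = e^x` is
(any) positive element with `1 ≺ E` and `D E = E` for the derivation — for this
purely asymptotic statement only `1 ≺ E` is needed.  Powers are
`y^c := exp (c · log y)`.
-/

/-- `f ≺ g`: `|f| < r·|g|` for every real `r > 0`. -/
def Prec {T : Type*} [Field T] [LinearOrder T] [IsStrictOrderedRing T] [Algebra ℝ T] (f g : T) : Prop :=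
  ∀ r : ℝ, 0 < r → |f| < algebraMap ℝ T r * |g|

theorem transseries_asymptotics_of_root
    (T : Type*) [Field T] [LinearOrder T] [IsStrictOrderedRing T] [Algebra ℝ T]
    (hmono : StrictMono (algebraMap ℝ T))
    (exp log : T → T)
    (hexp_pos : ∀ t, 0 < exp t)
    (hexp_mono : StrictMono exp)
    (hexp_add : ∀ s t, exp (s + t) = exp s * exp t)
    (hexp_real : ∀ r : ℝ, exp (algebraMap ℝ T r) = algebraMap ℝ T (Real.exp r))
    (hexp_log : ∀ t : T, 0 < t → exp (log t) = t)
    (E : T) (hEpos : 0 < E) (hE : Prec 1 E)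
    (c : ℝ) (hc : 0 < c) (a : ℝ) (ha : a ≠ 0)
    (y : T) (hy : y ≠ 0)
    (hroot : exp (algebraMap ℝ T c * log |y|) * (y + 1) = algebraMap ℝ T a * E) :
    Prec (y - algebraMap ℝ T (if 0 < a then a ^ (1 / (c + 1) : ℝ)
            else -((-a) ^ (1 / (c + 1) : ℝ))) *
          exp (algebraMap ℝ T (1 / (c + 1)) * log E))
         (algebraMap ℝ T (if 0 < a then a ^ (1 / (c + 1) : ℝ)
            else -((-a) ^ (1 / (c + 1) : ℝ))) *
          exp (algebraMap ℝ T (1 / (c + 1)) * log E)) := by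
  unfold Prec
  set R : ℝ →+* T := algebraMap ℝ T with hRdef
  have Rpos : ∀ {r : ℝ}, 0 < r → 0 < R r := by
    intro r hr
    have := hmono hr
    simpa using this
  have exp0 : exp 0 = 1 := by
    have h := hexp_real 0
    simpa using h
  have expinj : Function.Injective exp := hexp_mono.injective
  have log_eq : ∀ (z s : T), 0 < z → exp s = z → log z = s := by
    intro z s hz hs
    exact expinj (by rw [hexp_log z hz, hs])
  have logE : exp (log E) = E := hexp_log E hEpos
  have E1 : (1 : T) < E := by
    have h := hE 1 one_pos
    simpa [abs_of_pos hEpos] using h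
  have E_big : ∀ t : ℝ, R t < E := by
    intro t
    rcases le_or_gt t 0 with h | h
    · have h2 : R t ≤ R 0 := hmono.monotone h
      simp only [map_zero] at h2
      linarith
    · have h1 := hE (1/t) (by positivity)
      rw [abs_one, abs_of_pos hEpos] at h1
      have h2 := mul_lt_mul_of_pos_left h1 (Rpos h)
      calc R t = R t * 1 := (mul_one _).symm
        _ < R t * (R (1/t) * E) := h2
        _ = R (t * (1/t)) * E := by rw [map_mul, mul_assoc]
        _ = E := by rw [mul_one_div_cancel (ne_of_gt h), map_one, one_mul]
  have L_big : ∀ s : ℝ, R s < log E := by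
    intro s
    have h : exp (R s) < exp (log E) := by
      rw [logE, hexp_real]
      exact E_big _
    exact hexp_mono.lt_iff_lt.mp h
  have bigexp : ∀ γ : ℝ, 0 < γ → ∀ t : ℝ, R t < exp (R γ * log E) := by
    intro γ hγ t
    set s := Real.log (max t 1) with hs
    have h1 : R (s / γ) < log E := L_big _
    have h2 : R γ * R (s/γ) < R γ * log E := mul_lt_mul_of_pos_left h1 (Rpos hγ)
    have h3 : R γ * R (s/γ) = R s := by
      rw [← map_mul]
      congr 1
      field_simp
    rw [h3] at h2
    have h4 : exp (R s) < exp (R γ * log E) := hexp_mono h2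
    rw [hexp_real] at h4
    have h5 : Real.exp s = max t 1 := Real.exp_log (by positivity)
    calc R t ≤ R (max t 1) := hmono.monotone (le_max_left _ _)
      _ = R (Real.exp s) := by rw [h5]
      _ < _ := h4
  have smallexp : ∀ β : ℝ, 0 < β → β < 1 → ∀ ε : ℝ, 0 < ε →
      exp (R β * log E) < R ε * E := by
    intro β hβ0 hβ1 ε hε
    have hsplit : E = exp (R β * log E) * exp (R (1-β) * log E) := by
      rw [← hexp_add]
      have h : R β * log E + R (1-β) * log E = log E := by
        rw [← add_mul, ← map_add]
        have h2 : β + (1-β) = (1:ℝ) := by ring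
        rw [h2, map_one, one_mul]
      rw [h, logE]
    have h1 : R (1/ε) < exp (R (1-β) * log E) := bigexp _ (by linarith) _
    have h2 : (1:T) < R ε * exp (R (1-β) * log E) := by
      have h3 := mul_lt_mul_of_pos_left h1 (Rpos hε)
      rw [← map_mul, mul_one_div_cancel (ne_of_gt hε), map_one] at h3
      exact h3
    calc exp (R β * log E) = 1 * exp (R β * log E) := (one_mul _).symm
      _ < (R ε * exp (R (1-β) * log E)) * exp (R β * log E) :=
          mul_lt_mul_of_pos_right h2 (hexp_pos _)
      _ = R ε * (exp (R β * log E) * exp (R (1-β) * log E)) := by ring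
      _ = R ε * E := by rw [← hsplit]
  have hc1 : (0:ℝ) < c + 1 := by linarith
  set m : ℝ := 1/(c+1) with hm
  have hm0 : 0 < m := by rw [hm]; positivity
  set u : T := exp (R m * log E) with hu
  have hupos : 0 < u := hexp_pos _
  have logpu : ∀ p : ℝ, 0 < p → log (R p * u) = R (Real.log p) + R m * log E := by
    intro p hp
    apply log_eq _ _ (mul_pos (Rpos hp) hupos)
    rw [hexp_add, hexp_real, Real.exp_log hp, hu]
  have powmul : ∀ p : ℝ, 0 < p → ∀ q : ℝ,
      exp (R q * log (R p * u)) = R (p ^ q) * exp (R (q*m) * log E) := by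
    intro p hp q
    rw [logpu p hp, mul_add, ← mul_assoc, ← map_mul, ← map_mul, hexp_add, hexp_real]
    congr 2
    rw [Real.rpow_def_of_pos hp, mul_comm]
  have key : ∀ p : ℝ, 0 < p →
      exp (R c * log (R p * u)) * (R p * u) = R (p ^ (c+1:ℝ)) * E := by
    intro p hp
    rw [powmul p hp c]
    have e1 : exp (R (c*m) * log E) * u = E := by
      rw [hu, ← hexp_add, ← add_mul, ← map_add]
      have h : c*m + m = 1 := by rw [hm]; field_simp
      rw [h, map_one, one_mul, logE]
    calc R (p^(c:ℝ)) * exp (R (c*m) * log E) * (R p * u)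
        = (R (p^(c:ℝ)) * R p) * (exp (R (c*m) * log E) * u) := by ring
      _ = R (p ^ (c+1:ℝ)) * E := by
          rw [e1, ← map_mul]
          congr 2
          rw [Real.rpow_add_one (ne_of_gt hp)]
  have expc_small : ∀ p : ℝ, 0 < p → ∀ δ : ℝ, 0 < δ →
      exp (R c * log (R p * u)) < R δ * E := by
    intro p hp δ hδ
    rw [powmul p hp c]
    have hpc : (0:ℝ) < p ^ (c:ℝ) := Real.rpow_pos_of_pos hp c
    have hcm0 : 0 < c*m := by positivity
    have hcm1 : c*m < 1 := by
      rw [hm, mul_one_div, div_lt_one hc1]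
      linarith
    have h1 := smallexp (c*m) hcm0 hcm1 (δ / p^(c:ℝ)) (by positivity)
    have h2 := mul_lt_mul_of_pos_left h1 (Rpos hpc)
    calc R (p^(c:ℝ)) * exp (R (c*m) * log E) < R (p^(c:ℝ)) * (R (δ/p^(c:ℝ)) * E) := h2
      _ = R (p^(c:ℝ) * (δ / p^(c:ℝ))) * E := by rw [map_mul, mul_assoc]
      _ = R δ * E := by
          congr 2
          field_simp
  have logmono : ∀ {s t : T}, 0 < s → s ≤ t → log s ≤ log t := by
    intro s t hs hst
    apply hexp_mono.le_iff_le.mp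
    rw [hexp_log s hs, hexp_log t (lt_of_lt_of_le hs hst)]
    exact hst
  have CORE : ∀ A : ℝ, 0 < A → ∀ w dd : T, (dd = 1 ∨ dd = -1) → 0 < w → 0 < w + dd →
      exp (R c * log w) * (w + dd) = R A * E →
      ∀ r : ℝ, 0 < r → r < 1 →
      R ((1-r) * A ^ (m:ℝ)) * u < w ∧ w < R ((1+r) * A ^ (m:ℝ)) * u := by
    intro A hA w dd hdd hw hwd H r hr0 hr1
    set β : ℝ := A ^ (m:ℝ) with hβ
    have hβ0 : 0 < β := Real.rpow_pos_of_pos hA _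
    have hβpow : β ^ (c+1:ℝ) = A := by
      rw [hβ, ← Real.rpow_mul (le_of_lt hA), hm, one_div_mul_cancel (ne_of_gt hc1),
        Real.rpow_one]
    have hdd1 : dd ≤ 1 := by rcases hdd with h | h <;> rw [h] <;> norm_num
    have hddm1 : (-1:T) ≤ dd := by rcases hdd with h | h <;> rw [h] <;> norm_num
    constructor
    · by_contra hcon
      push_neg at hcon
      set p : ℝ := (1-r)*β with hp
      have hp0 : 0 < p := mul_pos (by linarith) hβ0
      have hz : 0 < R p * u := mul_pos (Rpos hp0) hupos
      have h1 : exp (R c * log w) ≤ exp (R c * log (R p * u)) :=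
        hexp_mono.monotone (mul_le_mul_of_nonneg_left (logmono hw hcon) (le_of_lt (Rpos hc)))
      have h2 : w + dd ≤ R p * u + dd := by linarith
      have h3 : exp (R c * log w) * (w + dd) ≤ exp (R c * log (R p * u)) * (R p * u + dd) :=
        mul_le_mul h1 h2 (le_of_lt hwd) (le_of_lt (hexp_pos _))
      have hpc1 : p ^ (c+1:ℝ) < A := by
        rw [hp, Real.mul_rpow (by linarith) (le_of_lt hβ0), hβpow]
        have hr2 : (1-r:ℝ) ^ (c+1:ℝ) < 1 :=
          Real.rpow_lt_one (by linarith) (by linarith) (by linarith)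
        nlinarith
      have h4 : exp (R c * log (R p * u)) * (R p * u + dd)
          = R (p ^ (c+1:ℝ)) * E + exp (R c * log (R p * u)) * dd := by
        rw [mul_add, key p hp0]
      have h5 : exp (R c * log (R p * u)) * dd ≤ exp (R c * log (R p * u)) := by
        calc exp (R c * log (R p * u)) * dd
            ≤ exp (R c * log (R p * u)) * 1 :=
              mul_le_mul_of_nonneg_left hdd1 (le_of_lt (hexp_pos _))
          _ = _ := mul_one _
      have h6 : exp (R c * log (R p * u)) < R (A - p^(c+1:ℝ)) * E :=
        expc_small p hp0 _ (by linarith)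
      have h7 : R (p^(c+1:ℝ)) * E + R (A - p^(c+1:ℝ)) * E = R A * E := by
        rw [← add_mul, ← map_add]
        congr 2
        ring
      linarith [H, h3, h4, h5, h6, h7]
    · by_contra hcon
      push_neg at hcon
      set p : ℝ := (1+r)*β with hp
      have hp0 : 0 < p := mul_pos (by linarith) hβ0
      have hz : 0 < R p * u := mul_pos (Rpos hp0) hupos
      have hz1 : (1:T) < R p * u := by
        have hb := bigexp m hm0 (1/p)
        calc (1:T) = R p * R (1/p) := by
              rw [← map_mul, mul_one_div_cancel (ne_of_gt hp0), map_one]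
          _ < R p * u := mul_lt_mul_of_pos_left hb (Rpos hp0)
      have h1 : exp (R c * log (R p * u)) ≤ exp (R c * log w) :=
        hexp_mono.monotone (mul_le_mul_of_nonneg_left (logmono hz hcon) (le_of_lt (Rpos hc)))
      have h2 : R p * u + dd ≤ w + dd := by linarith
      have h3 : exp (R c * log (R p * u)) * (R p * u + dd) ≤ exp (R c * log w) * (w + dd) :=
        mul_le_mul h1 h2 (by linarith) (le_of_lt (hexp_pos _))
      have hpc1 : A < p ^ (c+1:ℝ) := by
        rw [hp, Real.mul_rpow (by linarith) (le_of_lt hβ0), hβpow]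
        have hr2 : (1:ℝ) < (1+r:ℝ) ^ (c+1:ℝ) :=
          (Real.one_lt_rpow_iff_of_pos (by linarith)).mpr (Or.inl ⟨by linarith, by linarith⟩)
        nlinarith
      have h4 : exp (R c * log (R p * u)) * (R p * u + dd)
          = R (p ^ (c+1:ℝ)) * E + exp (R c * log (R p * u)) * dd := by
        rw [mul_add, key p hp0]
      have h5 : -exp (R c * log (R p * u)) ≤ exp (R c * log (R p * u)) * dd := by
        calc -exp (R c * log (R p * u))
            = exp (R c * log (R p * u)) * (-1) := by ring
          _ ≤ exp (R c * log (R p * u)) * dd :=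
              mul_le_mul_of_nonneg_left hddm1 (le_of_lt (hexp_pos _))
      have h6 : exp (R c * log (R p * u)) < R (p^(c+1:ℝ) - A) * E :=
        expc_small p hp0 _ (by linarith)
      have h7 : R (p^(c+1:ℝ)) * E - R (p^(c+1:ℝ) - A) * E = R A * E := by
        rw [← sub_mul, ← map_sub]
        congr 2
        ring
      linarith [H, h3, h4, h5, h6, h7]
  intro r hr
  set r' : ℝ := min r (1/2) with hr'
  have hr'0 : 0 < r' := lt_min hr (by norm_num)
  have hr'1 : r' < 1 := lt_of_le_of_lt (min_le_right _ _) (by norm_num)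
  have hr'r : r' ≤ r := min_le_left _ _
  rcases ha.lt_or_gt with haneg | hapos
  · -- a < 0
    rw [if_neg (not_lt.mpr (le_of_lt haneg))]
    set β : ℝ := (-a) ^ (m:ℝ) with hβ
    have hβ0 : 0 < β := Real.rpow_pos_of_pos (by linarith) _
    have hEa : R a * E < 0 := by
      have hRa : R a < 0 := by
        have := hmono haneg
        simpa using this
      exact mul_neg_of_neg_of_pos hRa hEpos
    have hy1 : y + 1 < 0 := by
      by_contra h
      push_neg at h
      have h2 := mul_nonneg (le_of_lt (hexp_pos (R c * log |y|))) h
      rw [hroot] at h2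
      linarith
    have hyneg : y < 0 := by linarith
    have hyabs : |y| = -y := abs_of_neg hyneg
    rw [hyabs] at hroot
    have hroot2 : exp (R c * log (-y)) * ((-y) + (-1)) = R (-a) * E := by
      calc exp (R c * log (-y)) * ((-y) + (-1))
          = -(exp (R c * log (-y)) * (y+1)) := by ring
        _ = -(R a * E) := by rw [hroot]
        _ = R (-a) * E := by rw [map_neg, neg_mul]
    obtain ⟨hlow, hhigh⟩ := CORE (-a) (by linarith) (-y) (-1) (Or.inr rfl)
      (by linarith) (by linarith) hroot2 r' hr'0 hr'1
    have hbu : 0 < R β * u := mul_pos (Rpos hβ0) hupos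
    have habs2 : |R (-β) * u| = R β * u := by
      rw [map_neg, neg_mul, abs_neg, abs_of_pos hbu]
    have habs1 : y - R (-β) * u = -((-y) - R β * u) := by
      rw [map_neg]; ring
    rw [habs1, abs_neg, habs2]
    have e1 : R ((1+r')*β) * u = R β * u + R r' * (R β * u) := by
      rw [← mul_assoc, ← map_mul]
      rw [show (1+r')*β = β + r'*β by ring, map_add, add_mul]
    have e2 : R ((1-r')*β) * u = R β * u - R r' * (R β * u) := by
      rw [← mul_assoc, ← map_mul]
      rw [show (1-r')*β = β - r'*β by ring, map_sub, sub_mul]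
    have e3 : R r' * (R β * u) ≤ R r * (R β * u) :=
      mul_le_mul_of_nonneg_right (hmono.monotone hr'r) (le_of_lt hbu)
    rw [abs_sub_lt_iff]
    constructor
    · rw [e1] at hhigh; linarith
    · rw [e2] at hlow; linarith
  · -- a > 0
    rw [if_pos hapos]
    set β : ℝ := a ^ (m:ℝ) with hβ
    have hβ0 : 0 < β := Real.rpow_pos_of_pos hapos _
    have hEa : 0 < R a * E := mul_pos (Rpos hapos) hEpos
    have hy1 : 0 < y + 1 := by
      by_contra h
      push_neg at h
      have h2 := mul_nonpos_of_nonneg_of_nonpos (le_of_lt (hexp_pos (R c * log |y|))) h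
      rw [hroot] at h2
      linarith
    have hy0 : 0 < y := by
      rcases lt_trichotomy y 0 with h | h | h
      · exfalso
        have hylt : |y| = -y := abs_of_neg h
        have hy_lt1 : |y| < 1 := by rw [hylt]; linarith
        have hlogneg : log |y| < 0 := by
          have h2 : exp (log |y|) < exp 0 := by
            rw [hexp_log _ (abs_pos.mpr hy), exp0]
            exact hy_lt1
          exact hexp_mono.lt_iff_lt.mp h2
        have h1 : exp (R c * log |y|) < 1 := by
          have h2 : R c * log |y| < 0 := mul_neg_of_pos_of_neg (Rpos hc) hlogneg
          calc exp (R c * log |y|) < exp 0 := hexp_mono h2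
            _ = 1 := exp0
        have h2 : exp (R c * log |y|) * (y+1) < 1 := by
          have hyle : y + 1 ≤ 1 := by linarith
          calc exp (R c * log |y|) * (y+1)
              ≤ exp (R c * log |y|) * 1 :=
                mul_le_mul_of_nonneg_left hyle (le_of_lt (hexp_pos _))
            _ = exp (R c * log |y|) := mul_one _
            _ < 1 := h1
        have h3 : (1:T) < R a * E := by
          have hb := E_big (1/a)
          calc (1:T) = R a * R (1/a) := by
                rw [← map_mul, mul_one_div_cancel (ne_of_gt hapos), map_one]
            _ < R a * E := mul_lt_mul_of_pos_left hb (Rpos hapos)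
        rw [hroot] at h2
        linarith
      · exact absurd h hy
      · exact h
    have hyabs : |y| = y := abs_of_pos hy0
    rw [hyabs] at hroot
    obtain ⟨hlow, hhigh⟩ := CORE a hapos y 1 (Or.inl rfl) hy0 (by linarith)
      hroot r' hr'0 hr'1
    have hbu : 0 < R β * u := mul_pos (Rpos hβ0) hupos
    rw [abs_of_pos hbu]
    have e1 : R ((1+r')*β) * u = R β * u + R r' * (R β * u) := by
      rw [← mul_assoc, ← map_mul]
      rw [show (1+r')*β = β + r'*β by ring, map_add, add_mul]
    have e2 : R ((1-r')*β) * u = R β * u - R r' * (R β * u) := by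
      rw [← mul_assoc, ← map_mul]
      rw [show (1-r')*β = β - r'*β by ring, map_sub, sub_mul]
    have e3 : R r' * (R β * u) ≤ R r * (R β * u) :=
      mul_le_mul_of_nonneg_right (hmono.monotone hr'r) (le_of_lt hbu)
    rw [abs_sub_lt_iff]
    constructor
    · rw [e1] at hhigh; linarith
    · rw [e2] at hlow; linarith
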